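/- The strictly anticausal part of the product of a causal function with a rational strictly anticausal function is rational: Let Ā ∈ ℂ^{n×n} have spectral radius strictly less than 1, let B̄ ∈ ℂ^{n×m} and C̄ ∈ ℂ^{p×n}, and define S(θ) := C̄ (e^{−iθ} I − Ā)⁻¹ B̄ for θ ∈ ℝ. Let U : ℝ → ℂ^{s×p} be continuous and 2π-periodic with (1/2π)∫₀^{2π} U(θ) e^{−ikθ} dθ = 0 for every integer k ≥ 1 (i.e., U is causal: its Fourier coefficients at strictly positive frequencies vanish). Define Γ := (1/2π)∫₀^{2π} U(θ) C̄ (I − e^{iθ} Ā)⁻¹ dθ ∈ ℂ^{s×n}. Then for every integer k ≥ 1: (1/2π)∫₀^{2π} U(θ) S(θ) e^{−ikθ} dθ = Γ Ā^{k−1} B̄. Equivalently, the strictly anticausal part of the product U·S is the rational function θ ↦ Γ (e^{−iθ} I − Ā)⁻¹ B̄. -/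

import Mathlib

open Matrix MeasureTheory

noncomputable section

namespace Stmt16Aux

variable {n : ℕ}

lemma det_unit (Abar : Matrix (Fin n) (Fin n) ℂ)
    (hA : ∀ μ ∈ spectrum ℂ Abar, ‖μ‖ < 1) (θ : ℝ) :
    IsUnit ((1 : Matrix (Fin n) (Fin n) ℂ) - Complex.exp ((θ : ℂ) * Complex.I) • Abar).det := by
  set c : ℂ := Complex.exp ((θ : ℂ) * Complex.I) with hc
  have hc0 : c ≠ 0 := Complex.exp_ne_zero _
  have habs : ‖c‖ = 1 := by
    rw [hc, Complex.norm_exp]; simp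
  have hspec : c⁻¹ ∉ spectrum ℂ Abar := by
    intro h
    have h1 := hA _ h
    rw [norm_inv, habs] at h1
    norm_num at h1
  have hu : IsUnit ((algebraMap ℂ (Matrix (Fin n) (Fin n) ℂ)) c⁻¹ - Abar) :=
    spectrum.notMem_iff.mp hspec
  have hfac : (1 : Matrix (Fin n) (Fin n) ℂ) - c • Abar
      = c • ((algebraMap ℂ (Matrix (Fin n) (Fin n) ℂ)) c⁻¹ - Abar) := by
    rw [Algebra.algebraMap_eq_smul_one, smul_sub, smul_smul, mul_inv_cancel₀ hc0, one_smul]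
  rw [hfac, Matrix.det_smul]
  exact ((Ne.isUnit hc0).pow _).mul ((Matrix.isUnit_iff_isUnit_det _).mp hu)

lemma geom_inv (A : Matrix (Fin n) (Fin n) ℂ) (c : ℂ)
    (h : IsUnit ((1 : Matrix (Fin n) (Fin n) ℂ) - c • A).det) (K : ℕ) :
    ((1 : Matrix (Fin n) (Fin n) ℂ) - c • A)⁻¹
      = (∑ j ∈ Finset.range K, c ^ j • A ^ j)
        + c ^ K • (((1 : Matrix (Fin n) (Fin n) ℂ) - c • A)⁻¹ * A ^ K) := by
  set M : Matrix (Fin n) (Fin n) ℂ := (1 : Matrix (Fin n) (Fin n) ℂ) - c • A with hM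
  refine Matrix.inv_eq_left_inv ?_
  have h1 : (∑ j ∈ Finset.range K, c ^ j • A ^ j) * M = 1 - c ^ K • A ^ K := by
    have := geom_sum_mul_neg (c • A) K
    simpa [smul_pow] using this
  have hcomm : M * A ^ K = A ^ K * M := by
    rw [hM]
    simp only [Matrix.sub_mul, Matrix.mul_sub, Matrix.one_mul, Matrix.mul_one,
      Matrix.smul_mul, Matrix.mul_smul]
    rw [← pow_succ, ← pow_succ']
  have h2 : (c ^ K • (M⁻¹ * A ^ K)) * M = c ^ K • A ^ K := by
    rw [Matrix.smul_mul, Matrix.mul_assoc, ← hcomm, ← Matrix.mul_assoc,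
      Matrix.nonsing_inv_mul _ h, Matrix.one_mul]
  rw [Matrix.add_mul, h1, h2, sub_add_cancel]

lemma inv_smul_one_sub (A : Matrix (Fin n) (Fin n) ℂ) (c : ℂ) (hc0 : c ≠ 0)
    (h : IsUnit ((1 : Matrix (Fin n) (Fin n) ℂ) - c • A).det) :
    (c⁻¹ • (1 : Matrix (Fin n) (Fin n) ℂ) - A)⁻¹
      = c • ((1 : Matrix (Fin n) (Fin n) ℂ) - c • A)⁻¹ := by
  refine Matrix.inv_eq_left_inv ?_
  have hfac : c⁻¹ • (1 : Matrix (Fin n) (Fin n) ℂ) - A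
      = c⁻¹ • ((1 : Matrix (Fin n) (Fin n) ℂ) - c • A) := by
    rw [smul_sub, smul_smul, inv_mul_cancel₀ hc0, one_smul]
  rw [hfac, Matrix.smul_mul, Matrix.mul_smul, Matrix.nonsing_inv_mul _ h, smul_smul,
    mul_inv_cancel₀ hc0, one_smul]

lemma scal (c : ℂ) (hc0 : c ≠ 0) {j K : ℕ} (hj : j ≤ K) :
    ((c⁻¹) ^ (K + 1) * c) * c ^ j = (c⁻¹) ^ (K - j) := by
  have h1 : (c⁻¹) ^ (K + 1) * c = (c⁻¹) ^ K := by
    rw [pow_succ, mul_assoc, inv_mul_cancel₀ hc0, mul_one]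
  have h2 : (c⁻¹) ^ (K - j) * (c⁻¹) ^ j = (c⁻¹) ^ K := by
    rw [← pow_add, Nat.sub_add_cancel hj]
  rw [h1, ← h2, mul_assoc, ← mul_pow, inv_mul_cancel₀ hc0, one_pow, mul_one]

lemma full (A : Matrix (Fin n) (Fin n) ℂ) (c : ℂ) (hc0 : c ≠ 0)
    (h : IsUnit ((1 : Matrix (Fin n) (Fin n) ℂ) - c • A).det) (K : ℕ) :
    (c⁻¹) ^ (K + 1) • (c⁻¹ • (1 : Matrix (Fin n) (Fin n) ℂ) - A)⁻¹
      = (∑ j ∈ Finset.range K, (c⁻¹) ^ (K - j) • A ^ j)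
        + ((1 : Matrix (Fin n) (Fin n) ℂ) - c • A)⁻¹ * A ^ K := by
  rw [inv_smul_one_sub A c hc0 h, smul_smul]
  conv_lhs => rw [geom_inv A c h K]
  rw [smul_add, Finset.smul_sum]
  congr 1
  · refine Finset.sum_congr rfl fun j hj => ?_
    rw [smul_smul, scal c hc0 (Finset.mem_range.mp hj).le]
  · rw [smul_smul, scal c hc0 (le_refl K), Nat.sub_self, pow_zero, one_smul]

lemma inv_cont (Abar : Matrix (Fin n) (Fin n) ℂ)
    (hA : ∀ μ ∈ spectrum ℂ Abar, ‖μ‖ < 1) :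
    Continuous fun θ : ℝ =>
      ((1 : Matrix (Fin n) (Fin n) ℂ) - Complex.exp ((θ : ℂ) * Complex.I) • Abar)⁻¹ := by
  have hexp : Continuous fun θ : ℝ => Complex.exp ((θ : ℂ) * Complex.I) :=
    Complex.continuous_exp.comp (Complex.continuous_ofReal.mul continuous_const)
  have hM : Continuous fun θ : ℝ =>
      ((1 : Matrix (Fin n) (Fin n) ℂ) - Complex.exp ((θ : ℂ) * Complex.I) • Abar) :=
    continuous_const.sub (hexp.smul continuous_const)
  rw [continuous_iff_continuousAt]
  intro θ
  refine ContinuousAt.comp ?_ hM.continuousAt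
  refine continuousAt_matrix_inv _ ?_
  rw [Ring.inverse_eq_inv']
  exact continuousAt_inv₀ ((det_unit Abar hA θ).ne_zero)

end Stmt16Aux

/-- The strictly anticausal part of the product of a causal function with a rational
strictly anticausal function is rational: for every `k ≥ 1`, the `k`-th positive-frequency
Fourier coefficient of `θ ↦ U(θ)·S(θ)`, with `S(θ) = C̄(e^{−iθ}I − Ā)⁻¹B̄`, equals
`Γ Ā^{k−1} B̄` where `Γ = (1/2π)∫ U(θ) C̄ (I − e^{iθ}Ā)⁻¹ dθ`. -/
theorem stmt_16 {n m p s : ℕ}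
    (Abar : Matrix (Fin n) (Fin n) ℂ)
    (hA : ∀ μ ∈ spectrum ℂ Abar, ‖μ‖ < 1)
    (Bbar : Matrix (Fin n) (Fin m) ℂ) (Cbar : Matrix (Fin p) (Fin n) ℂ)
    (U : ℝ → Matrix (Fin s) (Fin p) ℂ) (hUcont : Continuous U)
    (hUper : Function.Periodic U (2 * Real.pi))
    (hUcausal : ∀ k : ℕ, 1 ≤ k → ∀ a b,
      (∫ θ in (0 : ℝ)..(2 * Real.pi),
        U θ a b * Complex.exp (-(k : ℂ) * (θ : ℂ) * Complex.I)) = 0)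
    (Γ : Matrix (Fin s) (Fin n) ℂ)
    (hΓ : ∀ a b, Γ a b = (1 / (2 * (Real.pi : ℂ))) *
      ∫ θ in (0 : ℝ)..(2 * Real.pi),
        (U θ * (Cbar * ((1 : Matrix (Fin n) (Fin n) ℂ)
          - Complex.exp ((θ : ℂ) * Complex.I) • Abar)⁻¹)) a b) :
    ∀ k : ℕ, 1 ≤ k → ∀ a b,
      (1 / (2 * (Real.pi : ℂ))) *
          (∫ θ in (0 : ℝ)..(2 * Real.pi),
            (U θ * (Cbar * (Complex.exp (-(θ : ℂ) * Complex.I) •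
                (1 : Matrix (Fin n) (Fin n) ℂ) - Abar)⁻¹ * Bbar)) a b *
              Complex.exp (-(k : ℂ) * (θ : ℂ) * Complex.I)) =
        (Γ * Abar ^ (k - 1) * Bbar) a b := by
  intro k hk a b
  obtain ⟨K, rfl⟩ : ∃ K, k = K + 1 := ⟨k - 1, (Nat.succ_pred_eq_of_pos hk).symm⟩
  -- the key pointwise identity for the integrand
  have key : ∀ θ : ℝ,
      (U θ * (Cbar * (Complex.exp (-(θ : ℂ) * Complex.I) •
          (1 : Matrix (Fin n) (Fin n) ℂ) - Abar)⁻¹ * Bbar)) a b *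
        Complex.exp (-((K + 1 : ℕ) : ℂ) * (θ : ℂ) * Complex.I)
      = (∑ j ∈ Finset.range K, ∑ c' : Fin p,
            (Cbar * (Abar ^ j * Bbar)) c' b *
              (U θ a c' * Complex.exp (-((K - j : ℕ) : ℂ) * (θ : ℂ) * Complex.I)))
        + ∑ c' : Fin n,
            (U θ * (Cbar * ((1 : Matrix (Fin n) (Fin n) ℂ)
              - Complex.exp ((θ : ℂ) * Complex.I) • Abar)⁻¹)) a c' *
              (Abar ^ K * Bbar) c' b := by
    intro θ
    set c : ℂ := Complex.exp ((θ : ℂ) * Complex.I) with hcdef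
    have hc0 : c ≠ 0 := Complex.exp_ne_zero _
    have hdet : IsUnit ((1 : Matrix (Fin n) (Fin n) ℂ) - c • Abar).det :=
      Stmt16Aux.det_unit Abar hA θ
    have hcinv : Complex.exp (-(θ : ℂ) * Complex.I) = c⁻¹ := by
      rw [neg_mul, hcdef, ← Complex.exp_neg]
    have hek : ∀ mm : ℕ,
        Complex.exp (-(mm : ℂ) * (θ : ℂ) * Complex.I) = (c⁻¹) ^ mm := by
      intro mm
      have harg : (-(mm : ℂ) * (θ : ℂ) * Complex.I)
          = (mm : ℕ) * (-((θ : ℂ) * Complex.I)) := by push_cast; ring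
      rw [harg, Complex.exp_nat_mul, Complex.exp_neg, hcdef]
    rw [hcinv]
    simp only [hek]
    -- matrix-level identity
    have HX := Stmt16Aux.full Abar c hc0 hdet K
    have keyM : (c⁻¹) ^ (K + 1) •
          (U θ * (Cbar * (c⁻¹ • (1 : Matrix (Fin n) (Fin n) ℂ) - Abar)⁻¹ * Bbar))
        = (∑ j ∈ Finset.range K, (c⁻¹) ^ (K - j) • (U θ * (Cbar * (Abar ^ j * Bbar))))
          + U θ * (Cbar * ((1 : Matrix (Fin n) (Fin n) ℂ) - c • Abar)⁻¹)
              * (Abar ^ K * Bbar) := by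
      have hstep : U θ * (Cbar * ((c⁻¹) ^ (K + 1) •
            (c⁻¹ • (1 : Matrix (Fin n) (Fin n) ℂ) - Abar)⁻¹) * Bbar)
          = (c⁻¹) ^ (K + 1) •
            (U θ * (Cbar * (c⁻¹ • (1 : Matrix (Fin n) (Fin n) ℂ) - Abar)⁻¹ * Bbar)) := by
        simp only [Matrix.mul_smul, Matrix.smul_mul]
      rw [← hstep, HX, Matrix.mul_add, Matrix.add_mul, Matrix.mul_add]
      refine congrArg₂ (· + ·) ?_ ?_
      · rw [Matrix.mul_sum, Matrix.sum_mul, Matrix.mul_sum]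
        refine Finset.sum_congr rfl fun j _ => ?_
        rw [Matrix.mul_smul, Matrix.smul_mul, Matrix.mul_smul, Matrix.mul_assoc]
      · simp only [Matrix.mul_assoc]
    have keyE := congrArg (fun M : Matrix (Fin s) (Fin m) ℂ => M a b) keyM
    simp only [Matrix.smul_apply, Matrix.add_apply, Matrix.sum_apply,
      smul_eq_mul] at keyE
    calc (U θ * (Cbar * (c⁻¹ • (1 : Matrix (Fin n) (Fin n) ℂ) - Abar)⁻¹ * Bbar)) a b
            * (c⁻¹) ^ (K + 1)
        = (c⁻¹) ^ (K + 1) *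
            (U θ * (Cbar * (c⁻¹ • (1 : Matrix (Fin n) (Fin n) ℂ) - Abar)⁻¹ * Bbar)) a b :=
          mul_comm _ _
      _ = _ := by
          rw [keyE]
          have e1 : ∀ j ∈ Finset.range K,
              c⁻¹ ^ (K - j) * (U θ * (Cbar * (Abar ^ j * Bbar))) a b
              = ∑ c' : Fin p, (Cbar * (Abar ^ j * Bbar)) c' b *
                  (U θ a c' * c⁻¹ ^ (K - j)) := by
            intro j _
            rw [Matrix.mul_apply, Finset.mul_sum]
            exact Finset.sum_congr rfl fun c' _ => by ring
          rw [Finset.sum_congr rfl e1, Matrix.mul_apply]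
  -- rewrite the integrand
  rw [show (∫ θ in (0 : ℝ)..(2 * Real.pi),
        (U θ * (Cbar * (Complex.exp (-(θ : ℂ) * Complex.I) •
            (1 : Matrix (Fin n) (Fin n) ℂ) - Abar)⁻¹ * Bbar)) a b *
          Complex.exp (-((K + 1 : ℕ) : ℂ) * (θ : ℂ) * Complex.I))
      = ∫ θ in (0 : ℝ)..(2 * Real.pi),
        ((∑ j ∈ Finset.range K, ∑ c' : Fin p,
            (Cbar * (Abar ^ j * Bbar)) c' b *
              (U θ a c' * Complex.exp (-((K - j : ℕ) : ℂ) * (θ : ℂ) * Complex.I)))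
        + ∑ c' : Fin n,
            (U θ * (Cbar * ((1 : Matrix (Fin n) (Fin n) ℂ)
              - Complex.exp ((θ : ℂ) * Complex.I) • Abar)⁻¹)) a c' *
              (Abar ^ K * Bbar) c' b) from by
    exact intervalIntegral.integral_congr fun θ _ => key θ]
  -- continuity facts
  have hGcont : Continuous fun θ : ℝ =>
      U θ * (Cbar * ((1 : Matrix (Fin n) (Fin n) ℂ)
        - Complex.exp ((θ : ℂ) * Complex.I) • Abar)⁻¹) :=
    hUcont.matrix_mul (continuous_const.matrix_mul (Stmt16Aux.inv_cont Abar hA))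
  have hexpc : ∀ mm : ℕ, Continuous fun θ : ℝ =>
      Complex.exp (-(mm : ℂ) * (θ : ℂ) * Complex.I) :=
    fun mm => Complex.continuous_exp.comp
      ((continuous_const.mul Complex.continuous_ofReal).mul continuous_const)
  have hg_int : ∀ j ∈ Finset.range K, IntervalIntegrable
      (fun θ : ℝ => ∑ c' : Fin p, (Cbar * (Abar ^ j * Bbar)) c' b *
        (U θ a c' * Complex.exp (-((K - j : ℕ) : ℂ) * (θ : ℂ) * Complex.I)))
      MeasureTheory.volume 0 (2 * Real.pi) := by
    intro j _
    refine Continuous.intervalIntegrable ?_ _ _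
    exact continuous_finset_sum _ fun c' _ =>
      continuous_const.mul ((hUcont.matrix_elem a c').mul (hexpc (K - j)))
  have hh_int : IntervalIntegrable
      (fun θ : ℝ => ∑ c' : Fin n,
        (U θ * (Cbar * ((1 : Matrix (Fin n) (Fin n) ℂ)
          - Complex.exp ((θ : ℂ) * Complex.I) • Abar)⁻¹)) a c' *
          (Abar ^ K * Bbar) c' b) MeasureTheory.volume 0 (2 * Real.pi) := by
    refine Continuous.intervalIntegrable ?_ _ _
    exact continuous_finset_sum _ fun c' _ => (hGcont.matrix_elem a c').mul continuous_const
  have hg_int' : IntervalIntegrable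
      (fun θ : ℝ => ∑ j ∈ Finset.range K, ∑ c' : Fin p,
        (Cbar * (Abar ^ j * Bbar)) c' b *
          (U θ a c' * Complex.exp (-((K - j : ℕ) : ℂ) * (θ : ℂ) * Complex.I)))
      MeasureTheory.volume 0 (2 * Real.pi) := by
    refine Continuous.intervalIntegrable ?_ _ _
    exact continuous_finset_sum _ fun j _ => continuous_finset_sum _ fun c' _ =>
      continuous_const.mul ((hUcont.matrix_elem a c').mul (hexpc (K - j)))
  rw [intervalIntegral.integral_add hg_int' hh_int]
  -- the causal part vanishes
  have hg0 : (∫ θ in (0 : ℝ)..(2 * Real.pi),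
      ∑ j ∈ Finset.range K, ∑ c' : Fin p,
        (Cbar * (Abar ^ j * Bbar)) c' b *
          (U θ a c' * Complex.exp (-((K - j : ℕ) : ℂ) * (θ : ℂ) * Complex.I))) = 0 := by
    rw [intervalIntegral.integral_finset_sum hg_int]
    refine Finset.sum_eq_zero fun j hj => ?_
    rw [intervalIntegral.integral_finset_sum (f := fun c' θ => (Cbar * (Abar ^ j * Bbar)) c' b *
        (U θ a c' * Complex.exp (-((K - j : ℕ) : ℂ) * (θ : ℂ) * Complex.I))) (fun c' _ =>
      Continuous.intervalIntegrable
        (continuous_const.mul ((hUcont.matrix_elem a c').mul (hexpc (K - j)))) _ _)]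
    refine Finset.sum_eq_zero fun c' _ => ?_
    rw [intervalIntegral.integral_const_mul,
      hUcausal (K - j) (by have := Finset.mem_range.mp hj; omega) a c', mul_zero]
  rw [hg0, zero_add]
  rw [intervalIntegral.integral_finset_sum (f := fun c' θ =>
      (U θ * (Cbar * ((1 : Matrix (Fin n) (Fin n) ℂ)
        - Complex.exp ((θ : ℂ) * Complex.I) • Abar)⁻¹)) a c' * (Abar ^ K * Bbar) c' b) (fun c' _ =>
    Continuous.intervalIntegrable ((hGcont.matrix_elem a c').mul continuous_const) _ _)]
  simp only [intervalIntegral.integral_mul_const]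
  rw [Finset.mul_sum, Nat.add_sub_cancel, Matrix.mul_assoc Γ, Matrix.mul_apply]
  refine Finset.sum_congr rfl fun c' _ => ?_
  rw [hΓ a c', mul_assoc]
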